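/- Let L be a finite language over alphabet Σ in which every word has length exactly n ≥ 3, and suppose L is accepted by a context-free grammar G in Chomsky normal form in which every nonterminal appears in some parse tree. Then L can be written as a union of at most n·|G| balanced rectangles, where a rectangle is a language of the form ∪_{w₁w₃ ∈ L₁, |w₁|=n₁, |w₃|=n₃} {w₁} · L₂ · {w₃} for some L₁ ⊆ Σ^{n₁+n₃}, L₂ ⊆ Σ^{n₂} with n₁ + n₂ + n₃ = n, and 'balanced' means n/3 ≤ n₂ ≤ 2n/3. Moreover, if G is unambiguous, the rectangles in the union can be chosen pairwise disjoint. -/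

import Mathlib

/-- Parse trees over terminals `T` and nonterminals `N`. -/
inductive ParseTree (T N : Type*) : Type _
  | leaf (a : T) : ParseTree T N
  | node (A : N) (children : List (ParseTree T N)) : ParseTree T N

namespace ParseTree

variable {T N : Type*}

/-- The symbol at the root of a parse tree. -/
def rootSymbol : ParseTree T N → Symbol T N
  | .leaf a => Symbol.terminal a
  | .node A _ => Symbol.nonterminal A

mutual
  /-- The word of terminals at the leaves of a parse tree. -/
  def yieldWord : ParseTree T N → List T
    | .leaf a => [a]
    | .node _ cs => yieldWords cs
  def yieldWords : List (ParseTree T N) → List T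
    | [] => []
    | c :: cs => yieldWord c ++ yieldWords cs
end

/-- A parse tree is valid for a grammar `g` if every inner node is an application of a
rule of `g`. -/
inductive Valid (g : ContextFreeGrammar T) : ParseTree T g.NT → Prop
  | leaf (a : T) : Valid g (.leaf a)
  | node (A : g.NT) (cs : List (ParseTree T g.NT))
      (hrule : (⟨A, cs.map rootSymbol⟩ : ContextFreeRule T g.NT) ∈ g.rules)
      (hcs : ∀ c ∈ cs, Valid g c) : Valid g (.node A cs)

/-- A parse tree of a word `w` in the grammar `g`. -/
def IsParseTreeOf (g : ContextFreeGrammar T) (t : ParseTree T g.NT) (w : List T) : Prop :=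
  Valid g t ∧ t.rootSymbol = Symbol.nonterminal g.initial ∧ t.yieldWord = w

end ParseTree

/-- `L'` is a balanced rectangle for word length `n`: a union
`⋃_{(w₁,w₃) ∈ L₁} {w₁} · L₂ · {w₃}` with `|w₁| = n₁`, `|w₃| = n₃`, all words of `L₂` of
length `n₂`, `n₁ + n₂ + n₃ = n` and `n/3 ≤ n₂ ≤ 2n/3` (stated multiplicatively). -/
def IsBalancedRect {α : Type*} (n : ℕ) (L' : Set (List α)) : Prop :=
  ∃ n₁ n₂ n₃ : ℕ, n₁ + n₂ + n₃ = n ∧ n ≤ 3 * n₂ ∧ 3 * n₂ ≤ 2 * n ∧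
    ∃ L₁ : Set (List α × List α), ∃ L₂ : Set (List α),
      (∀ p ∈ L₁, p.1.length = n₁ ∧ p.2.length = n₃) ∧
      (∀ u ∈ L₂, u.length = n₂) ∧
      L' = {w | ∃ p ∈ L₁, ∃ u ∈ L₂, w = p.1 ++ u ++ p.2}


namespace CFAux

open ParseTree

variable {T : Type*}

@[simp] lemma yieldWords_nil {N : Type*} : yieldWords ([] : List (ParseTree T N)) = [] := rfl

@[simp] lemma yieldWords_cons {N : Type*} (c : ParseTree T N) (cs : List (ParseTree T N)) :
    yieldWords (c :: cs) = yieldWord c ++ yieldWords cs := rfl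

@[simp] lemma yieldWord_leaf {N : Type*} (a : T) : yieldWord (.leaf a : ParseTree T N) = [a] := rfl

@[simp] lemma yieldWord_node {N : Type*} (A : N) (cs : List (ParseTree T N)) :
    yieldWord (.node A cs) = yieldWords cs := rfl

lemma yieldWords_append {N : Type*} (l₁ l₂ : List (ParseTree T N)) :
    yieldWords (l₁ ++ l₂) = yieldWords l₁ ++ yieldWords l₂ := by
  induction l₁ with
  | nil => simp
  | cons c cs ih => simp [ih]

lemma yieldWords_map_leaf {N : Type*} (w : List T) :
    yieldWords ((w.map .leaf : List (ParseTree T N))) = w := by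
  induction w with
  | nil => simp
  | cons a w ih => simp [ih]

mutual
theorem derives_of_valid {g : ContextFreeGrammar T} (t : ParseTree T g.NT) (h : Valid g t) :
    g.Derives [t.rootSymbol] (t.yieldWord.map Symbol.terminal) :=
  match t, h with
  | .leaf a, _ => by
    simp only [rootSymbol, yieldWord_leaf, List.map_cons, List.map_nil]
    exact Relation.ReflTransGen.refl
  | .node A cs, .node _ _ hrule hcs => by
    have h1 : g.Produces [Symbol.nonterminal A] (cs.map rootSymbol) :=
      ⟨_, hrule, by simpa using ContextFreeRule.Rewrites.input_output⟩
    exact h1.trans_derives (derives_list cs hcs)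
theorem derives_list {g : ContextFreeGrammar T} (ts : List (ParseTree T g.NT))
    (h : ∀ t ∈ ts, Valid g t) :
    g.Derives (ts.map rootSymbol) ((yieldWords ts).map Symbol.terminal) :=
  match ts with
  | [] => by
    simp only [List.map_nil, yieldWords_nil]
    exact Relation.ReflTransGen.refl
  | t :: ts' => by
    have h1 := derives_of_valid t (h t (by simp))
    have h2 := derives_list ts' (fun c hc => h c (by simp [hc]))
    have := (h1.append_right (ts'.map rootSymbol)).trans
      (h2.append_left ((t.yieldWord).map Symbol.terminal))
    simpa using this
end

theorem trees_of_derives {g : ContextFreeGrammar T} {v : List (Symbol T g.NT)} {w : List T}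
    (h : g.Derives v (w.map Symbol.terminal)) :
    ∃ ts : List (ParseTree T g.NT), ts.map rootSymbol = v ∧
      (∀ t ∈ ts, Valid g t) ∧ yieldWords ts = w := by
  induction h using Relation.ReflTransGen.head_induction_on with
  | refl =>
    refine ⟨w.map .leaf, ?_, ?_, yieldWords_map_leaf w⟩
    · simp [rootSymbol]
    · intro t ht
      obtain ⟨a, -, rfl⟩ := List.mem_map.1 ht
      exact .leaf a
  | head hprod hderiv ih =>
    obtain ⟨ts', hroot, hvalid, hyield⟩ := ih
    obtain ⟨r, hr, hrw⟩ := hprod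
    obtain ⟨p, q, hv, hv'⟩ := hrw.exists_parts
    rw [hv'] at hroot
    rw [List.append_assoc] at hroot
    obtain ⟨l₁, l₂, rfl, hl₁, hl₂⟩ := List.map_eq_append_iff.1 hroot
    obtain ⟨lm, l₃, rfl, hlm, hl₃⟩ := List.map_eq_append_iff.1 hl₂
    refine ⟨l₁ ++ [ParseTree.node r.input lm] ++ l₃, ?_, ?_, ?_⟩
    · simp only [List.map_append, hl₁, hl₃, List.map_cons, List.map_nil]
      rw [hv]; simp [rootSymbol]
    · intro t ht
      simp only [List.mem_append, List.mem_singleton] at ht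
      rcases ht with (ht | rfl) | ht
      · exact hvalid t (by simp [ht])
      · refine ParseTree.Valid.node _ _ ?_ (fun c hc => hvalid c (by simp [hc]))
        rw [hlm]
        exact hr
      · exact hvalid t (by simp [ht])
    · rw [← hyield]
      rw [yieldWords_append, yieldWords_append, yieldWords_append]
      simp [yieldWords_append]
end CFAux

namespace CFAux
open ParseTree
variable {T : Type*}

def canon {N : Type*} (n : ℕ) (d : N) : ParseTree T N → ℕ → N × ℕ
  | .leaf _, i => (d, i)
  | .node A cs, i =>
    match cs with
    | [c₁, c₂] =>
      if 3 * (c₁.yieldWord.length + c₂.yieldWord.length) ≤ 2 * n then (A, i)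
      else if c₂.yieldWord.length ≤ c₁.yieldWord.length then canon n d c₁ i
      else canon n d c₂ (i + c₁.yieldWord.length)
    | _ => (A, i)

lemma canon_stop {N : Type*} (n : ℕ) (d : N) (A : N) (cs : List (ParseTree T N)) (i : ℕ)
    (h : 3 * (yieldWord (.node A cs)).length ≤ 2 * n) :
    canon n d (.node A cs) i = (A, i) := by
  match cs with
  | [c₁, c₂] =>
    simp only [canon]
    rw [if_pos]
    simpa using h
  | [] => simp [canon]
  | [c] => simp [canon]
  | c₁ :: c₂ :: c₃ :: cs => simp [canon]

end CFAux

namespace CFAux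
open ParseTree
variable {T : Type*} {g : ContextFreeGrammar T}

lemma canon_spec (n : ℕ) (d : g.NT) (hn2 : 2 ≤ n)
    (hCNF : ∀ r ∈ g.rules,
      (∃ B C : g.NT, r.output = [Symbol.nonterminal B, Symbol.nonterminal C]) ∨
      (∃ a : T, r.output = [Symbol.terminal a])) :
    ∀ t : ParseTree T g.NT, Valid g t → (∃ A cs, t = .node A cs) →
      ∀ i : ℕ, n < 3 * t.yieldWord.length →
      ∃ (B : g.NT) (j : ℕ) (x z : List T) (sub : ParseTree T g.NT),
        canon n d t i = (B, j) ∧ j = i + x.length ∧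
        (2 * n < 3 * t.yieldWord.length → ∃ r ∈ g.rules, Symbol.nonterminal B ∈ r.output) ∧
        Valid g sub ∧ sub.rootSymbol = Symbol.nonterminal B ∧
        t.yieldWord = x ++ sub.yieldWord ++ z ∧
        n < 3 * sub.yieldWord.length ∧ 3 * sub.yieldWord.length ≤ 2 * n ∧
        (∀ t₂ : ParseTree T g.NT, Valid g t₂ → t₂.rootSymbol = Symbol.nonterminal B →
          t₂.yieldWord.length = sub.yieldWord.length →
          ∃ T₂ : ParseTree T g.NT, Valid g T₂ ∧ T₂.rootSymbol = t.rootSymbol ∧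
            T₂.yieldWord = x ++ t₂.yieldWord ++ z ∧ canon n d T₂ i = (B, j)) := by
  suffices H : ∀ (k : ℕ) (t : ParseTree T g.NT), sizeOf t ≤ k → Valid g t →
      (∃ A cs, t = .node A cs) →
      ∀ i : ℕ, n < 3 * t.yieldWord.length →
      ∃ (B : g.NT) (j : ℕ) (x z : List T) (sub : ParseTree T g.NT),
        canon n d t i = (B, j) ∧ j = i + x.length ∧
        (2 * n < 3 * t.yieldWord.length → ∃ r ∈ g.rules, Symbol.nonterminal B ∈ r.output) ∧
        Valid g sub ∧ sub.rootSymbol = Symbol.nonterminal B ∧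
        t.yieldWord = x ++ sub.yieldWord ++ z ∧
        n < 3 * sub.yieldWord.length ∧ 3 * sub.yieldWord.length ≤ 2 * n ∧
        (∀ t₂ : ParseTree T g.NT, Valid g t₂ → t₂.rootSymbol = Symbol.nonterminal B →
          t₂.yieldWord.length = sub.yieldWord.length →
          ∃ T₂ : ParseTree T g.NT, Valid g T₂ ∧ T₂.rootSymbol = t.rootSymbol ∧
            T₂.yieldWord = x ++ t₂.yieldWord ++ z ∧ canon n d T₂ i = (B, j)) by
    intro t; exact H (sizeOf t) t le_rfl
  intro k
  induction k with
  | zero =>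
    intro t ht _ hnode
    obtain ⟨A, cs, rfl⟩ := hnode
    simp at ht
  | succ k ih =>
    intro t hsize hval hnode i hlen
    obtain ⟨A, cs, rfl⟩ := hnode
    by_cases hstop : 3 * (yieldWord (ParseTree.node A cs)).length ≤ 2 * n
    · refine ⟨A, i, [], [], ParseTree.node A cs, canon_stop n d A cs i hstop, by simp,
        fun h => absurd h (by simpa using hstop), hval, rfl, by simp, hlen, hstop, ?_⟩
      intro t₂ hv₂ hroot₂ hlen₂
      cases t₂ with
      | leaf a => simp [rootSymbol] at hroot₂
      | node A₂ cs₂ =>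
        have hA : A₂ = A := by simpa [rootSymbol] using hroot₂
        subst hA
        refine ⟨ParseTree.node A₂ cs₂, hv₂, rfl, by simp, ?_⟩
        exact canon_stop n d A₂ cs₂ i (by rw [hlen₂]; exact hstop)
    · cases hval with
    | node _ _ hrule hcs =>
      rcases hCNF _ hrule with ⟨B₁, B₂, hout⟩ | ⟨a, hout⟩
      · -- binary rule
        simp only at hout
        rcases cs with _ | ⟨c₁, _ | ⟨c₂, _ | ⟨c₃, cs⟩⟩⟩ <;> simp at hout
        obtain ⟨hc₁, hc₂⟩ := hout
        have hm : (yieldWord (ParseTree.node A [c₁, c₂])).length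
            = c₁.yieldWord.length + c₂.yieldWord.length := by simp
        rw [hm] at hlen hstop
        have hnode₁ : ∃ A' cs', c₁ = ParseTree.node A' cs' := by
          cases c₁ with
          | leaf a => simp [rootSymbol] at hc₁
          | node A' cs' => exact ⟨A', cs', rfl⟩
        have hnode₂ : ∃ A' cs', c₂ = ParseTree.node A' cs' := by
          cases c₂ with
          | leaf a => simp [rootSymbol] at hc₂
          | node A' cs' => exact ⟨A', cs', rfl⟩
        have hsize₁ : sizeOf c₁ ≤ k := by
          have := List.sizeOf_lt_of_mem (show c₁ ∈ [c₁, c₂] by simp)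
          simp at hsize this; omega
        have hsize₂ : sizeOf c₂ ≤ k := by
          have := List.sizeOf_lt_of_mem (show c₂ ∈ [c₁, c₂] by simp)
          simp at hsize this; omega
        by_cases hheavy : c₂.yieldWord.length ≤ c₁.yieldWord.length
        · -- descend left
          have hlen₁ : n < 3 * c₁.yieldWord.length := by omega
          obtain ⟨B, j, x, z, sub, hcanon, hj, hocc, hsubval, hsubroot, hsplit, hlb, hub,
            hexch⟩ := ih c₁ hsize₁ (hcs c₁ (by simp)) hnode₁ i hlen₁
          have hcanon' : canon n d (ParseTree.node A [c₁, c₂]) i = (B, j) := by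
            simp only [canon]
            rw [if_neg (by omega), if_pos hheavy]
            exact hcanon
          refine ⟨B, j, x, z ++ c₂.yieldWord, sub, hcanon', hj, ?_, hsubval, hsubroot, ?_,
            hlb, hub, ?_⟩
          · intro _
            by_cases h2 : 2 * n < 3 * c₁.yieldWord.length
            · exact hocc h2
            · obtain ⟨A', cs', rfl⟩ := hnode₁
              rw [canon_stop n d A' cs' i (by omega)] at hcanon
              have hB : A' = B := by simpa using congrArg Prod.fst hcanon
              have hA' : A' = B₁ := by simpa [ParseTree.rootSymbol] using hc₁
              exact ⟨_, hrule, by simp [ParseTree.rootSymbol, ← hB, hA']⟩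
          · rw [yieldWord_node, yieldWords_cons, yieldWords_cons, yieldWords_nil, hsplit]
            simp
          · intro t₂ hv₂ hr₂ hl₂
            obtain ⟨T₂', hT'val, hT'root, hT'yield, hT'canon⟩ := hexch t₂ hv₂ hr₂ hl₂
            have hT'len : T₂'.yieldWord.length = c₁.yieldWord.length := by
              rw [hT'yield, hsplit]; simp [hl₂]
            refine ⟨ParseTree.node A [T₂', c₂], ?_, rfl, ?_, ?_⟩
            · refine ParseTree.Valid.node A [T₂', c₂] ?_ ?_
              · have : List.map rootSymbol [T₂', c₂] = List.map rootSymbol [c₁, c₂] := by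
                  simp [hT'root]
                rw [this]; exact hrule
              · intro c hc
                simp only [List.mem_cons, List.not_mem_nil, or_false] at hc
                rcases hc with rfl | rfl
                · exact hT'val
                · exact hcs _ (by simp)
            · rw [yieldWord_node, yieldWords_cons, yieldWords_cons, yieldWords_nil, hT'yield]
              simp
            · simp only [canon]
              rw [if_neg (by rw [hT'len]; omega), if_pos (by rw [hT'len]; exact hheavy)]
              exact hT'canon
        · -- descend right
          have hlen₂' : n < 3 * c₂.yieldWord.length := by omega
          obtain ⟨B, j, x, z, sub, hcanon, hj, hocc, hsubval, hsubroot, hsplit, hlb, hub,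
            hexch⟩ := ih c₂ hsize₂ (hcs c₂ (by simp)) hnode₂ (i + c₁.yieldWord.length) hlen₂'
          have hcanon' : canon n d (ParseTree.node A [c₁, c₂]) i = (B, j) := by
            simp only [canon]
            rw [if_neg (by omega), if_neg hheavy]
            exact hcanon
          refine ⟨B, j, c₁.yieldWord ++ x, z, sub, hcanon', by simp [hj]; omega, ?_, hsubval,
            hsubroot, ?_, hlb, hub, ?_⟩
          · intro _
            by_cases h2 : 2 * n < 3 * c₂.yieldWord.length
            · exact hocc h2
            · obtain ⟨A', cs', rfl⟩ := hnode₂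
              rw [canon_stop n d A' cs' _ (by omega)] at hcanon
              have hB : A' = B := by simpa using congrArg Prod.fst hcanon
              have hA' : A' = B₂ := by simpa [ParseTree.rootSymbol] using hc₂
              exact ⟨_, hrule, by simp [ParseTree.rootSymbol, ← hB, hA']⟩
          · rw [yieldWord_node, yieldWords_cons, yieldWords_cons, yieldWords_nil, hsplit]
            simp
          · intro t₂ hv₂ hr₂ hl₂
            obtain ⟨T₂', hT'val, hT'root, hT'yield, hT'canon⟩ := hexch t₂ hv₂ hr₂ hl₂
            have hT'len : T₂'.yieldWord.length = c₂.yieldWord.length := by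
              rw [hT'yield, hsplit]; simp [hl₂]
            refine ⟨ParseTree.node A [c₁, T₂'], ?_, rfl, ?_, ?_⟩
            · refine ParseTree.Valid.node A [c₁, T₂'] ?_ ?_
              · have : List.map rootSymbol [c₁, T₂'] = List.map rootSymbol [c₁, c₂] := by
                  simp [hT'root]
                rw [this]; exact hrule
              · intro c hc
                simp only [List.mem_cons, List.not_mem_nil, or_false] at hc
                rcases hc with rfl | rfl
                · exact hcs _ (by simp)
                · exact hT'val
            · rw [yieldWord_node, yieldWords_cons, yieldWords_cons, yieldWords_nil, hT'yield]
              simp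
            · simp only [canon]
              rw [if_neg (by rw [hT'len]; omega), if_neg (by rw [hT'len]; exact hheavy)]
              exact hT'canon
      · -- terminal rule
        simp only at hout
        rcases cs with _ | ⟨c, _ | ⟨c', cs⟩⟩ <;> simp at hout
        cases c with
        | node A' cs' => simp [rootSymbol] at hout
        | leaf a' =>
          have : (yieldWord (ParseTree.node A [ParseTree.leaf a'])).length = 1 := by simp
          omega

end CFAux

namespace CFAux
open ParseTree
variable {T : Type*} {g : ContextFreeGrammar T}

lemma ell_exists (n : ℕ) (L : Set (List T)) (hacc : (g.language : Set (List T)) = L)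
    (hlen : ∀ w ∈ L, w.length = n)
    (happ : ∀ A : g.NT, ∃ t : ParseTree T g.NT, ∃ w ∈ L,
      ParseTree.IsParseTreeOf g t w ∧
      ∃ u v : List (Symbol T g.NT),
        g.Derives [Symbol.nonterminal g.initial] (u ++ [Symbol.nonterminal A] ++ v) ∧
        g.Derives (u ++ [Symbol.nonterminal A] ++ v) (w.map Symbol.terminal))
    (B : g.NT) :
    ∃ m : ℕ, ∀ t : ParseTree T g.NT, Valid g t → t.rootSymbol = Symbol.nonterminal B →
      (∃ w' ∈ L, ∃ x z : List T, w' = x ++ t.yieldWord ++ z ∧ x.length + t.yieldWord.length + z.length = n) ∧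
      t.yieldWord.length = m := by
  obtain ⟨t0, w, hw, hpt, u, v, h1, h2⟩ := happ B
  obtain ⟨ts, hroot, hval, hyield⟩ := trees_of_derives h2
  rw [List.append_assoc] at hroot
  obtain ⟨l₁, l₂, rfl, hl₁, hl₂⟩ := List.map_eq_append_iff.1 hroot
  rcases l₂ with _ | ⟨tb, l₃⟩
  · simp at hl₂
  rw [List.map_cons, List.singleton_append] at hl₂
  injection hl₂ with htb hl₃
  refine ⟨n - (yieldWords l₁).length - (yieldWords l₃).length, ?_⟩
  have main : ∀ t : ParseTree T g.NT, Valid g t → t.rootSymbol = Symbol.nonterminal B →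
      yieldWords l₁ ++ t.yieldWord ++ yieldWords l₃ ∈ L := by
    intro t hv hr
    have d1 : g.Derives u ((yieldWords l₁).map Symbol.terminal) := by
      rw [← hl₁]; exact derives_list l₁ (fun c hc => hval c (by simp [hc]))
    have d3 : g.Derives v ((yieldWords l₃).map Symbol.terminal) := by
      rw [← hl₃]; exact derives_list l₃ (fun c hc => hval c (by simp [hc]))
    have d2 : g.Derives [Symbol.nonterminal B] (t.yieldWord.map Symbol.terminal) := by
      rw [← hr]; exact derives_of_valid t hv
    have dall : g.Derives (u ++ [Symbol.nonterminal B] ++ v)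
        ((yieldWords l₁).map Symbol.terminal ++ t.yieldWord.map Symbol.terminal ++
          (yieldWords l₃).map Symbol.terminal) := by
      have := (d1.append_right ([Symbol.nonterminal B] ++ v)).trans
        (((d2.append_right v).append_left _).trans
          ((d3.append_left _).append_left _))
      simpa [List.append_assoc] using this
    have : g.Derives [Symbol.nonterminal g.initial]
        ((yieldWords l₁ ++ t.yieldWord ++ yieldWords l₃).map Symbol.terminal) := by
      rw [List.map_append, List.map_append]
      exact h1.trans dall
    have hmem : yieldWords l₁ ++ t.yieldWord ++ yieldWords l₃ ∈ g.language :=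
      (ContextFreeGrammar.mem_language_iff g _).2 this
    rw [hacc] at hmem
    exact hmem
  intro t hv hr
  have hmem := main t hv hr
  have hlen' := hlen _ hmem
  simp only [List.length_append] at hlen'
  exact ⟨⟨_, hmem, yieldWords l₁, yieldWords l₃, rfl, by omega⟩, by omega⟩

end CFAux

namespace CFAux
open ParseTree
variable {T : Type*}

def L2set (g : ContextFreeGrammar T) (B : g.NT) : Set (List T) :=
  {u | ∃ t : ParseTree T g.NT, Valid g t ∧ t.rootSymbol = Symbol.nonterminal B ∧ t.yieldWord = u}

def L1set (g : ContextFreeGrammar T) (n : ℕ) (d : g.NT) (L : Set (List T)) (q : g.NT × ℕ) :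
    Set (List T × List T) :=
  {p | p.1.length = q.2 ∧ ∃ u ∈ L2set g q.1, p.1 ++ u ++ p.2 ∈ L ∧
    ∃ tw, IsParseTreeOf g tw (p.1 ++ u ++ p.2) ∧ canon n d tw 0 = q}

def Rset (g : ContextFreeGrammar T) (n : ℕ) (d : g.NT) (L : Set (List T)) (q : g.NT × ℕ) :
    Set (List T) :=
  {w | ∃ p ∈ L1set g n d L q, ∃ u ∈ L2set g q.1, w = p.1 ++ u ++ p.2}

end CFAux

theorem stmt_17 {T : Type*} (n : ℕ) (hn : 3 ≤ n) (g : ContextFreeGrammar T)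
    (L : Set (List T)) (hacc : (g.language : Set (List T)) = L)
    (hfin : L.Finite) (hlen : ∀ w ∈ L, w.length = n)
    (hCNF : ∀ r ∈ g.rules,
      (∃ B C : g.NT, r.output = [Symbol.nonterminal B, Symbol.nonterminal C]) ∨
      (∃ a : T, r.output = [Symbol.terminal a]))
    (happ : ∀ A : g.NT, ∃ t : ParseTree T g.NT, ∃ w ∈ L,
      ParseTree.IsParseTreeOf g t w ∧
      ∃ u v : List (Symbol T g.NT),
        g.Derives [Symbol.nonterminal g.initial] (u ++ [Symbol.nonterminal A] ++ v) ∧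
        g.Derives (u ++ [Symbol.nonterminal A] ++ v) (w.map Symbol.terminal)) :
    ∃ k : ℕ, k ≤ n * (∑ r ∈ g.rules, r.output.length) ∧
      ∃ Rs : Fin k → Set (List T),
        (∀ i, IsBalancedRect n (Rs i)) ∧
        (⋃ i, Rs i) = L ∧
        ((∀ w ∈ L, ∃! t : ParseTree T g.NT, ParseTree.IsParseTreeOf g t w) →
          Pairwise (Function.onFun Disjoint Rs)) := by
  classical
  choose ℓ hℓ using CFAux.ell_exists n L hacc hlen happ
  have hℓlen : ∀ (B : g.NT) (t : ParseTree T g.NT), ParseTree.Valid g t →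
      t.rootSymbol = Symbol.nonterminal B → t.yieldWord.length = ℓ B :=
    fun B t hv hr => (hℓ B t hv hr).2
  have htree0 : ∀ w, w ∈ L → ∃ t, ParseTree.IsParseTreeOf g t w := by
    intro w hw
    have hw' : w ∈ g.language := by rw [hacc]; exact hw
    rw [ContextFreeGrammar.mem_language_iff] at hw'
    obtain ⟨ts, hroot, hval, hyield⟩ := CFAux.trees_of_derives hw'
    rcases ts with _ | ⟨t, _ | ⟨t', ts⟩⟩ <;> simp at hroot
    exact ⟨t, hval t (by simp), hroot, by simpa using hyield⟩
  choose tree htree using htree0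
  set d := g.initial with hd
  set idx : List T → g.NT × ℕ :=
    fun w => if h : w ∈ L then CFAux.canon n d (tree w h) 0 else (d, 0) with hidxdef
  have key : ∀ (w : List T), w ∈ L → ∀ (tw : ParseTree T g.NT), ParseTree.IsParseTreeOf g tw w →
      ∃ B j x z sub, CFAux.canon n d tw 0 = (B, j) ∧ j = x.length ∧
        (∃ r ∈ g.rules, Symbol.nonterminal B ∈ r.output) ∧
        ParseTree.Valid g sub ∧ sub.rootSymbol = Symbol.nonterminal B ∧
        w = x ++ sub.yieldWord ++ z ∧
        n < 3 * sub.yieldWord.length ∧ 3 * sub.yieldWord.length ≤ 2 * n ∧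
        (∀ t₂ : ParseTree T g.NT, ParseTree.Valid g t₂ →
          t₂.rootSymbol = Symbol.nonterminal B →
          t₂.yieldWord.length = sub.yieldWord.length →
          ∃ T₂, ParseTree.Valid g T₂ ∧ T₂.rootSymbol = Symbol.nonterminal g.initial ∧
            T₂.yieldWord = x ++ t₂.yieldWord ++ z ∧ CFAux.canon n d T₂ 0 = (B, j)) := by
    rintro w hw tw ⟨hv, hr, hy⟩
    have hnode : ∃ A cs, tw = ParseTree.node A cs := by
      cases tw with
      | leaf a => simp [ParseTree.rootSymbol] at hr
      | node A cs => exact ⟨A, cs, rfl⟩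
    have hylen : tw.yieldWord.length = n := by rw [hy]; exact hlen w hw
    obtain ⟨B, j, x, z, sub, h1, h2, h3, h4, h5, h6, h7, h8, h9⟩ :=
      CFAux.canon_spec n d (by omega) hCNF tw hv hnode 0 (by omega)
    refine ⟨B, j, x, z, sub, h1, by omega, h3 (by omega), h4, h5, by rw [← hy, h6], h7, h8, ?_⟩
    intro t₂ hv₂ hr₂ hl₂
    obtain ⟨T₂, k1, k2, k3, k4⟩ := h9 t₂ hv₂ hr₂ hl₂
    exact ⟨T₂, k1, by rw [k2, hr], k3, k4⟩
  have key2 : ∀ (q : g.NT × ℕ) (w' : List T), w' ∈ CFAux.Rset g n d L q →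
      w' ∈ L ∧ ∃ T₂, ParseTree.IsParseTreeOf g T₂ w' ∧ CFAux.canon n d T₂ 0 = q := by
    rintro ⟨B, j⟩ w' ⟨p, hp, u', hu', rfl⟩
    obtain ⟨hplen, u₀, hu₀, hw₀, tw, hpt, hcanon⟩ := hp
    obtain ⟨B', j', x, z, sub, h1, h2, h3, h4, h5, h6, h7, h8, h9⟩ := key _ hw₀ tw hpt
    have heq : (B, j) = (B', j') := by rw [← hcanon, ← h1]
    injection heq with hB hj
    subst hB; subst hj
    obtain ⟨u₀t, hu₀v, hu₀r, hu₀y⟩ := hu₀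
    have hu₀len : u₀.length = ℓ B := by rw [← hu₀y]; exact hℓlen B u₀t hu₀v hu₀r
    have hsublen : sub.yieldWord.length = ℓ B := hℓlen B sub h4 h5
    have hsplit1 : p.1 ++ u₀ = x ++ sub.yieldWord ∧ p.2 = z := by
      apply List.append_inj
      · simpa [List.append_assoc] using h6
      · simp only [List.length_append]; omega
    have hsplit2 : p.1 = x ∧ u₀ = sub.yieldWord := by
      apply List.append_inj hsplit1.1
      omega
    obtain ⟨t₂, hv₂, hr₂, hy₂⟩ := hu'
    have hl₂ : t₂.yieldWord.length = sub.yieldWord.length := by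
      rw [hsublen]
      rw [← hy₂] at *
      exact hℓlen B t₂ hv₂ hr₂
    obtain ⟨T₂, k1, k2, k3, k4⟩ := h9 t₂ hv₂ hr₂ hl₂
    have hyT₂ : T₂.yieldWord = p.1 ++ u' ++ p.2 := by
      rw [k3, hy₂, hsplit2.1, hsplit1.2]
    have hmem : p.1 ++ u' ++ p.2 ∈ L := by
      rw [← hacc]
      refine (ContextFreeGrammar.mem_language_iff g _).2 ?_
      have := CFAux.derives_of_valid T₂ k1
      rw [k2, hyT₂] at this
      exact this
    exact ⟨hmem, T₂, ⟨k1, k2, hyT₂⟩, k4⟩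
  have hidxval : ∀ w (hw : w ∈ L), idx w = CFAux.canon n d (tree w hw) 0 := by
    intro w hw
    simp only [hidxdef]
    rw [dif_pos hw]
  set Used : Finset (g.NT × ℕ) := hfin.toFinset.image idx with hUsed
  have hlenlist : Used.toList.length = Used.card := Finset.length_toList Used
  refine ⟨Used.card, ?_, ?_⟩
  · set N' : Finset g.NT := g.rules.biUnion (fun r => (r.output.filterMap
      (fun s => match s with | Symbol.nonterminal B => some B | _ => none)).toFinset) with hN'
    have hsub : Used ⊆ N' ×ˢ Finset.range n := by
      intro q hq
      obtain ⟨w, hwmem, rfl⟩ := Finset.mem_image.1 hq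
      have hw : w ∈ L := hfin.mem_toFinset.1 hwmem
      obtain ⟨B, j, x, z, sub, h1, h2, h3, h4, h5, h6, h7, h8, h9⟩ :=
        key w hw (tree w hw) (htree w hw)
      rw [hidxval w hw, h1]
      obtain ⟨r, hr, hBr⟩ := h3
      have hjn : j < n := by
        have hwl := hlen w hw
        rw [h6] at hwl; simp at hwl; omega
      refine Finset.mem_product.2 ⟨?_, Finset.mem_range.2 hjn⟩
      refine Finset.mem_biUnion.2 ⟨r, hr, ?_⟩
      rw [List.mem_toFinset]
      exact List.mem_filterMap.2 ⟨Symbol.nonterminal B, hBr, rfl⟩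
    calc Used.card ≤ (N' ×ˢ Finset.range n).card := Finset.card_le_card hsub
      _ = N'.card * n := by rw [Finset.card_product, Finset.card_range]
      _ ≤ (∑ r ∈ g.rules, r.output.length) * n := by
          apply Nat.mul_le_mul_right
          refine (Finset.card_biUnion_le).trans (Finset.sum_le_sum ?_)
          intro r hr
          exact (List.toFinset_card_le _).trans (List.length_filterMap_le _ _)
      _ = n * ∑ r ∈ g.rules, r.output.length := Nat.mul_comm _ _
  · refine ⟨fun i => CFAux.Rset g n d L (Used.toList.get (Fin.cast hlenlist.symm i)), ?_, ?_, ?_⟩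
    · intro i
      have hqmem : Used.toList.get (Fin.cast hlenlist.symm i) ∈ Used :=
        Finset.mem_toList.1 (List.get_mem Used.toList (Fin.cast hlenlist.symm i))
      obtain ⟨w, hwmem, hidxw⟩ := Finset.mem_image.1 hqmem
      have hw : w ∈ L := hfin.mem_toFinset.1 hwmem
      obtain ⟨B, j, x, z, sub, h1, h2, h3, h4, h5, h6, h7, h8, h9⟩ :=
        key w hw (tree w hw) (htree w hw)
      have hq : Used.toList.get (Fin.cast hlenlist.symm i) = (B, j) := by
        rw [← hidxw, hidxval w hw, h1]
      have hsublen : sub.yieldWord.length = ℓ B := hℓlen B sub h4 h5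
      have hwl := hlen w hw
      have hlens : j + ℓ B + z.length = n := by rw [h6] at hwl; simp at hwl; omega
      show IsBalancedRect n (CFAux.Rset g n d L (Used.toList.get (Fin.cast hlenlist.symm i)))
      rw [hq]
      refine ⟨j, ℓ B, n - j - ℓ B, by omega, by omega, by omega,
        CFAux.L1set g n d L (B, j), CFAux.L2set g B, ?_, ?_, rfl⟩
      · rintro p ⟨hplen, u₀, hu₀, hw₀, -⟩
        obtain ⟨t₀, hv₀, hr₀, hy₀⟩ := hu₀
        have hu₀len : u₀.length = ℓ B := by rw [← hy₀]; exact hℓlen B t₀ hv₀ hr₀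
        have hwl₀ := hlen _ hw₀
        simp only [List.length_append] at hwl₀
        exact ⟨hplen, by omega⟩
      · rintro u ⟨t₀, hv₀, hr₀, hy₀⟩
        rw [← hy₀]; exact hℓlen B t₀ hv₀ hr₀
    · apply Set.eq_of_subset_of_subset
      · intro w hw
        obtain ⟨S, ⟨i, rfl⟩, hwS⟩ := hw
        exact (key2 _ w hwS).1
      · intro w hw
        obtain ⟨B, j, x, z, sub, h1, h2, h3, h4, h5, h6, h7, h8, h9⟩ :=
          key w hw (tree w hw) (htree w hw)
        have hmemUsed : (B, j) ∈ Used := by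
          refine Finset.mem_image.2 ⟨w, hfin.mem_toFinset.2 hw, ?_⟩
          rw [hidxval w hw, h1]
        obtain ⟨m, hm⟩ := List.mem_iff_get.1 (Finset.mem_toList.2 hmemUsed)
        refine Set.mem_iUnion.2 ⟨Fin.cast hlenlist m, ?_⟩
        have hgm : Used.toList.get (Fin.cast hlenlist.symm (Fin.cast hlenlist m)) = (B, j) := by
          simpa using hm
        show w ∈ CFAux.Rset g n d L _
        rw [hgm]
        exact ⟨(x, z), ⟨h2.symm, sub.yieldWord, ⟨sub, h4, h5, rfl⟩, by rw [← h6]; exact hw,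
          tree w hw, by rw [← h6]; exact htree w hw, h1⟩, sub.yieldWord, ⟨sub, h4, h5, rfl⟩, h6⟩
    · intro hunamb i i' hne
      simp only [Function.onFun]
      rw [Set.disjoint_left]
      intro w hwi hwi'
      obtain ⟨hwL, T₂, hT₂, hc₂⟩ := key2 _ w hwi
      obtain ⟨-, T₂', hT₂', hc₂'⟩ := key2 _ w hwi'
      obtain ⟨t, -, huniq⟩ := hunamb w hwL
      have e1 := huniq T₂ hT₂
      have e2 := huniq T₂' hT₂'
      apply hne
      have hgeteq : Used.toList.get (Fin.cast hlenlist.symm i)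
          = Used.toList.get (Fin.cast hlenlist.symm i') := by
        rw [← hc₂, ← hc₂', e1, e2]
      have hinj := List.nodup_iff_injective_get.1 (Finset.nodup_toList Used) hgeteq
      exact Fin.ext (by simpa using congrArg Fin.val hinj)
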